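/- Let P be an invertible n×n real matrix. Then the second derivative of the function M ↦ log(det M) at P, evaluated on a pair of directions (A, B), equals −trace(P⁻¹ · A · P⁻¹ · B); i.e. the bilinear Hessian of log ∘ det at P is (A,B) ↦ −(P⁻¹ * A * P⁻¹ * B).trace. In particular at P = 1 the Hessian is (A,B) ↦ −trace(A·B). -/

import Mathlib

attribute [local instance] Matrix.normedAddCommGroup Matrix.normedSpace

open Matrix

noncomputable section LogDetAux

variable {n : ℕ}

local notation "Mat" => Matrix (Fin n) (Fin n) ℝ

/-- det as a continuous multilinear map in the rows. -/
def detCM (n : ℕ) : ContinuousMultilinearMap ℝ (fun _ : Fin n => (Fin n → ℝ)) ℝ :=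
  (Matrix.detRowAlternating (R := ℝ) (n := Fin n)).toMultilinearMap.mkContinuous
    (n.factorial) (by
      intro m
      have hm : (Matrix.detRowAlternating (R := ℝ) (n := Fin n)).toMultilinearMap m
          = (Matrix.of m).det := rfl
      rw [hm, Matrix.det_apply]
      calc ‖∑ σ : Equiv.Perm (Fin n), Equiv.Perm.sign σ • ∏ i, Matrix.of m (σ i) i‖
          ≤ ∑ σ : Equiv.Perm (Fin n), ‖Equiv.Perm.sign σ • ∏ i, Matrix.of m (σ i) i‖ :=
            norm_sum_le _ _
        _ ≤ ∑ _σ : Equiv.Perm (Fin n), ∏ i, ‖m i‖ := by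
            refine Finset.sum_le_sum fun σ _ => ?_
            have hsign : ‖Equiv.Perm.sign σ • ∏ i, Matrix.of m (σ i) i‖
                = ‖∏ i, Matrix.of m (σ i) i‖ := by
              rcases Int.units_eq_one_or (Equiv.Perm.sign σ) with h | h <;> simp [h]
            rw [hsign]
            calc ‖∏ i, Matrix.of m (σ i) i‖ ≤ ∏ i, ‖Matrix.of m (σ i) i‖ :=
                  le_of_eq (norm_prod _ _)
              _ ≤ ∏ i, ‖m (σ i)‖ := Finset.prod_le_prod (fun i _ => norm_nonneg _)
                  (fun i _ => norm_le_pi_norm (m (σ i)) i)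
              _ = ∏ i, ‖m i‖ := Equiv.prod_comp σ (fun i => ‖m i‖)
        _ = n.factorial * ∏ i, ‖m i‖ := by
            rw [Finset.sum_const, Finset.card_univ, Fintype.card_perm, Fintype.card_fin,
              nsmul_eq_mul])

lemma detCM_apply (M : Mat) : detCM n (fun i => M i) = M.det := rfl

lemma hasFDerivAt_det (M : Mat) :
    HasFDerivAt (fun X : Mat => X.det) ((detCM n).linearDeriv M) M :=
  (detCM n).hasFDerivAt M

lemma detDeriv_apply' (M H : Mat) :
    (detCM n).linearDeriv M H = (M.adjugate * H).trace := by
  erw [ContinuousMultilinearMap.linearDeriv_apply]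
  have hterm : ∀ i : Fin n, detCM n (Function.update M i (H i))
      = ∑ j, H i j * M.adjugate j i := by
    intro i
    have h1 : detCM n (Function.update M i (H i))
        = Matrix.detRowAlternating (Function.update M i (H i)) := rfl
    have h2 : H i = ∑ j : Fin n, H i j • (Pi.single j 1 : Fin n → ℝ) := by
      funext k
      simp [Pi.single_apply, Finset.sum_apply]
    rw [h1]
    conv_lhs => rw [h2]
    erw [AlternatingMap.map_update_sum]
    refine Finset.sum_congr rfl fun j _ => ?_
    erw [AlternatingMap.map_update_smul, smul_eq_mul]
    congr 1
    exact (Matrix.adjugate_apply M j i).symm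
  rw [Finset.sum_congr rfl fun i _ => hterm i]
  simp only [Matrix.trace, Matrix.diag_apply, Matrix.mul_apply]
  rw [Finset.sum_comm]
  exact Finset.sum_congr rfl fun i _ => Finset.sum_congr rfl fun j _ => mul_comm _ _

lemma detDeriv_apply (M H : Mat) :
    ((detCM n).linearDeriv M : Mat →L[ℝ] ℝ) H = (M.adjugate * H).trace :=
  detDeriv_apply' M H

lemma differentiable_det : Differentiable ℝ (fun X : Mat => X.det) :=
  fun M => (hasFDerivAt_det M).differentiableAt

lemma differentiable_updateRow (j : Fin n) (c : Fin n → ℝ) :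
    Differentiable ℝ (fun X : Mat => X.updateRow j c) := by
  refine differentiable_pi.mpr fun i => ?_
  have h : ∀ X : Mat, X.updateRow j c i = if i = j then c else X i := fun X =>
    Function.update_apply X j c i
  simp only [h]
  by_cases hij : i = j
  · simp only [if_pos hij]; exact differentiable_const _
  · simp only [if_neg hij]; exact differentiable_pi.mp differentiable_id i

lemma differentiable_adjugate : Differentiable ℝ (fun X : Mat => X.adjugate) := by
  refine differentiable_pi.mpr fun i => differentiable_pi.mpr fun j => ?_
  simp only [Matrix.adjugate_apply]
  exact differentiable_det.comp (differentiable_updateRow j (Pi.single i 1))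

lemma isBoundedBilinearMap_matmul :
    IsBoundedBilinearMap ℝ (fun p : Mat × Mat => p.1 * p.2) := by
  refine ⟨fun x₁ x₂ y => add_mul x₁ x₂ y, fun c x y => Matrix.smul_mul c x y,
    fun x y₁ y₂ => mul_add x y₁ y₂, fun c x y => Matrix.mul_smul x c y,
    ⟨(n : ℝ) + 1, by positivity, fun x y => ?_⟩⟩
  rw [Matrix.norm_le_iff (by positivity)]
  intro i j
  calc ‖(x * y) i j‖ = ‖∑ k, x i k * y k j‖ := by rw [Matrix.mul_apply]
    _ ≤ ∑ k, ‖x i k * y k j‖ := norm_sum_le _ _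
    _ ≤ ∑ _k : Fin n, ‖x‖ * ‖y‖ := Finset.sum_le_sum fun k _ => by
        rw [norm_mul]
        exact mul_le_mul (Matrix.norm_entry_le_entrywise_sup_norm x)
          (Matrix.norm_entry_le_entrywise_sup_norm y) (norm_nonneg _) (norm_nonneg _)
    _ = (n : ℝ) * (‖x‖ * ‖y‖) := by
        rw [Finset.sum_const, Finset.card_univ, Fintype.card_fin, nsmul_eq_mul]
    _ ≤ ((n : ℝ) + 1) * ‖x‖ * ‖y‖ := by nlinarith [norm_nonneg x, norm_nonneg y]

lemma eventually_isUnit {P : Mat} (hP : IsUnit P.det) :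
    ∀ᶠ x in nhds P, IsUnit x.det := by
  have hc : ContinuousAt (fun X : Mat => X.det) P :=
    (differentiable_det.continuous).continuousAt
  have := hc.eventually_ne (isUnit_iff_ne_zero.mp hP)
  exact this.mono fun x hx => isUnit_iff_ne_zero.mpr hx

lemma matDifferentiableAt_inv {P : Mat} (hP : IsUnit P.det) :
    DifferentiableAt ℝ (fun X : Mat => X⁻¹) P := by
  have hev : (fun X : Mat => X⁻¹) =ᶠ[nhds P] fun X => (X.det)⁻¹ • X.adjugate := by
    filter_upwards [eventually_isUnit hP] with x hx
    rw [Matrix.inv_def, Ring.inverse_eq_inv]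
  have hd : DifferentiableAt ℝ (fun X : Mat => (X.det)⁻¹ • X.adjugate) P :=
    ((differentiable_det P).inv (isUnit_iff_ne_zero.mp hP)).smul
      (differentiable_adjugate P)
  exact hd.congr_of_eventuallyEq hev

/-- left multiplication as a CLM -/
def mulLeftCLM (C : Mat) : Mat →L[ℝ] Mat :=
  LinearMap.toContinuousLinearMap (LinearMap.mulLeft ℝ C)

def mulRightCLM (C : Mat) : Mat →L[ℝ] Mat :=
  LinearMap.toContinuousLinearMap (LinearMap.mulRight ℝ C)

@[simp] lemma mulLeftCLM_apply (C X : Mat) : mulLeftCLM C X = C * X := rfl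
@[simp] lemma mulRightCLM_apply (C X : Mat) : mulRightCLM C X = X * C := rfl

def invDeriv (P : Mat) : Mat →L[ℝ] Mat :=
  -((mulRightCLM P⁻¹).comp (mulLeftCLM P⁻¹))

@[simp] lemma invDeriv_apply (P X : Mat) : invDeriv P X = -(P⁻¹ * X * P⁻¹) := rfl

lemma matHasFDerivAt_inv {P : Mat} (hP : IsUnit P.det) :
    HasFDerivAt (fun X : Mat => X⁻¹) (invDeriv P) P := by
  have hd := matDifferentiableAt_inv hP
  set L := fderiv ℝ (fun X : Mat => X⁻¹) P with hLdef
  have hinv : HasFDerivAt (fun X : Mat => X⁻¹) L P := hd.hasFDerivAt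
  have hmul : HasFDerivAt (fun X : Mat => X * X⁻¹)
      ((isBoundedBilinearMap_matmul.deriv (P, P⁻¹)).comp
        ((ContinuousLinearMap.id ℝ Mat).prod L)) P :=
    (isBoundedBilinearMap_matmul.hasFDerivAt (P, P⁻¹)).comp (f := fun x : Mat => (id x, x⁻¹)) P
      ((hasFDerivAt_id P).prodMk hinv)
  have hconst : (fun X : Mat => X * X⁻¹) =ᶠ[nhds P] fun _ => (1 : Mat) := by
    filter_upwards [eventually_isUnit hP] with x hx
    exact Matrix.mul_nonsing_inv x hx
  have h0 : HasFDerivAt (fun _ : Mat => (1 : Mat))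
      ((isBoundedBilinearMap_matmul.deriv (P, P⁻¹)).comp
        ((ContinuousLinearMap.id ℝ Mat).prod L)) P :=
    hmul.congr_of_eventuallyEq hconst.symm
  have hzero : (isBoundedBilinearMap_matmul.deriv (P, P⁻¹)).comp
      ((ContinuousLinearMap.id ℝ Mat).prod L) = 0 :=
    h0.unique (hasFDerivAt_const 1 P)
  have hLv : ∀ v : Mat, P * L v + v * P⁻¹ = 0 := by
    intro v
    have h := ContinuousLinearMap.ext_iff.mp hzero v
    erw [ContinuousLinearMap.comp_apply, ContinuousLinearMap.prod_apply,
      isBoundedBilinearMap_matmul.deriv_apply] at h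
    simp at h; exact h
  have hLeq : invDeriv P = L := by
    refine ContinuousLinearMap.ext fun v => ?_
    have h2 : P * L v = -(v * P⁻¹) := eq_neg_of_add_eq_zero_left (hLv v)
    have h1 : P⁻¹ * (P * L v) = L v := by
      rw [← Matrix.mul_assoc, Matrix.nonsing_inv_mul P hP, Matrix.one_mul]
    rw [invDeriv_apply, ← h1, h2]
    rw [Matrix.mul_neg, Matrix.mul_assoc]
  rw [← hLeq] at hinv
  exact hinv

def traceCLM (n : ℕ) : Matrix (Fin n) (Fin n) ℝ →L[ℝ] ℝ :=
  LinearMap.toContinuousLinearMap (Matrix.traceLinearMap (Fin n) ℝ ℝ)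

@[simp] lemma traceCLM_apply (X : Mat) : traceCLM n X = X.trace := rfl

/-- `y ↦ (H ↦ trace (y * H))` as a CLM into CLMs. -/
def traceMulCLM (n : ℕ) : Matrix (Fin n) (Fin n) ℝ →L[ℝ] (Matrix (Fin n) (Fin n) ℝ →L[ℝ] ℝ) :=
  LinearMap.toContinuousLinearMap
    { toFun := fun y => (traceCLM n).comp (mulLeftCLM y)
      map_add' := by intro y z; ext H; simp [add_mul]
      map_smul' := by intro c y; ext H; simp [smul_mul_assoc] }

@[simp] lemma traceMulCLM_apply (y H : Mat) : traceMulCLM n y H = (y * H).trace := rfl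

lemma hasFDerivAt_logDet {x : Mat} (hx : IsUnit x.det) :
    HasFDerivAt (fun X : Mat => Real.log X.det) (traceMulCLM n x⁻¹) x := by
  have h0 : x.det ≠ 0 := isUnit_iff_ne_zero.mp hx
  have h1 := (Real.hasDerivAt_log h0).comp_hasFDerivAt x (hasFDerivAt_det x)
  have heq : (traceMulCLM n x⁻¹ : Mat →L[ℝ] ℝ) = x.det⁻¹ • (detCM n).linearDeriv x := by
    refine ContinuousLinearMap.ext fun H => ?_
    have ha : (traceMulCLM n x⁻¹) H = x.det⁻¹ • (x.adjugate * H).trace := by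
      rw [traceMulCLM_apply, Matrix.inv_def, Ring.inverse_eq_inv, Matrix.smul_mul,
        Matrix.trace_smul]
    exact ha.trans (congrArg (fun t => x.det⁻¹ • t) (detDeriv_apply' x H)).symm
  rw [heq]
  exact h1

end LogDetAux

/-- For an invertible `n × n` real matrix `P`, the bilinear Hessian of `M ↦ log (det M)` at
`P` evaluated on directions `(A, B)` equals `−trace(P⁻¹ · A · P⁻¹ · B)`; in particular at
`P = 1` it is `(A,B) ↦ −trace(A·B)`. -/
theorem iteratedFDeriv_two_log_det (n : ℕ) (P : Matrix (Fin n) (Fin n) ℝ)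
    (hP : IsUnit P.det) (A B : Matrix (Fin n) (Fin n) ℝ) :
    iteratedFDeriv ℝ 2 (fun M : Matrix (Fin n) (Fin n) ℝ => Real.log M.det) P ![A, B] =
      -(P⁻¹ * A * P⁻¹ * B).trace := by
  rw [iteratedFDeriv_two_apply]
  have hev : (fderiv ℝ (fun M : Matrix (Fin n) (Fin n) ℝ => Real.log M.det)) =ᶠ[nhds P]
      (fun x => traceMulCLM n x⁻¹) :=
    (eventually_isUnit hP).mono fun x hx => (hasFDerivAt_logDet hx).fderiv
  erw [hev.fderiv_eq]
  have hF : HasFDerivAt (fun x : Matrix (Fin n) (Fin n) ℝ => traceMulCLM n x⁻¹)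
      ((traceMulCLM n).comp (invDeriv P)) P :=
    by
      letI : NormedAddCommGroup (Matrix (Fin n) (Fin n) ℝ →L[ℝ] ℝ) := ContinuousLinearMap.toNormedAddCommGroup
      letI : NormedSpace ℝ (Matrix (Fin n) (Fin n) ℝ →L[ℝ] ℝ) := ContinuousLinearMap.toNormedSpace
      exact (traceMulCLM n).hasFDerivAt.comp P (matHasFDerivAt_inv hP)
  erw [hF.fderiv]
  show traceMulCLM n (invDeriv P A) B = _
  rw [invDeriv_apply, traceMulCLM_apply]
  simp [Matrix.mul_assoc]
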